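/- Let p be a prime, H a countable free abelian group, and (b_n) a sequence of nonzero elements of H. Suppose (m_n) is an increasing sequence of naturals such that p^{m_n+n} does not divide p^{m_k+k}·b_k for any k < n. For ξ : ω → {0,1}, set c_{ξ,n} = ξ(n)·p^{m_n}. If ξ₀ ≠ ξ₁ and n is minimal with ξ₀(n) ≠ ξ₁(n), then Σ_{k=0}^{n} p^k c_{ξ₀,k} b_k − Σ_{k=0}^{n} p^k c_{ξ₁,k} b_k = ± p^{m_n+n} b_n, which is not congruent to 0 modulo p^{m_{n+1}+n+1}·H. -/
import Mathlib


open Finset in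
/-- with `m` increasing and `p ^ (m n + n)` not dividing `p ^ (m k + k) • b k`
for `k < n`, and `c_{ξ,n} = ξ n * p ^ (m n)` for `ξ : ℕ → {0,1}`, if `n` is minimal with
`ξ₀ n ≠ ξ₁ n` then the difference of the partial sums up to `n` equals `± p ^ (m n + n) • b n`
and is not congruent to `0` modulo `p ^ (m (n+1) + (n+1)) • H`. -/
theorem stmt1 (p : ℕ) (hp : p.Prime) (H : Type) [AddCommGroup H]
    [Module.Free ℤ H] [Countable H] (b : ℕ → H) (hb : ∀ n, b n ≠ 0)
    (m : ℕ → ℕ) (hm : StrictMono m)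
    (hdiv : ∀ n, ∀ k < n, ¬ ∃ h : H, ((p : ℤ) ^ (m n + n)) • h = ((p : ℤ) ^ (m k + k)) • b k)
    (ξ₀ ξ₁ : ℕ → ℕ) (hξ₀ : ∀ n, ξ₀ n ≤ 1) (hξ₁ : ∀ n, ξ₁ n ≤ 1)
    (n : ℕ) (hne : ξ₀ n ≠ ξ₁ n) (hmin : ∀ k < n, ξ₀ k = ξ₁ k) :
    ((∑ k ∈ range (n + 1), ((p : ℤ) ^ k * (ξ₀ k * p ^ (m k) : ℕ)) • b k)
        - ∑ k ∈ range (n + 1), ((p : ℤ) ^ k * (ξ₁ k * p ^ (m k) : ℕ)) • b k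
          = ((p : ℤ) ^ (m n + n)) • b n
      ∨ (∑ k ∈ range (n + 1), ((p : ℤ) ^ k * (ξ₀ k * p ^ (m k) : ℕ)) • b k)
        - ∑ k ∈ range (n + 1), ((p : ℤ) ^ k * (ξ₁ k * p ^ (m k) : ℕ)) • b k
          = -(((p : ℤ) ^ (m n + n)) • b n))
    ∧ ¬ ∃ h : H, ((p : ℤ) ^ (m (n + 1) + (n + 1))) • h
        = (∑ k ∈ range (n + 1), ((p : ℤ) ^ k * (ξ₀ k * p ^ (m k) : ℕ)) • b k)
          - ∑ k ∈ range (n + 1), ((p : ℤ) ^ k * (ξ₁ k * p ^ (m k) : ℕ)) • b k := by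

  have key : (∑ k ∈ range (n + 1), ((p : ℤ) ^ k * (ξ₀ k * p ^ (m k) : ℕ)) • b k)
      - ∑ k ∈ range (n + 1), ((p : ℤ) ^ k * (ξ₁ k * p ^ (m k) : ℕ)) • b k
      = (((ξ₀ n : ℤ) - (ξ₁ n : ℤ)) * (p : ℤ) ^ (m n + n)) • b n := by
    rw [← Finset.sum_sub_distrib, Finset.sum_range_succ, Finset.sum_eq_zero, zero_add,
      ← sub_smul]
    · congr 1
      push_cast
      ring
    · intro k hk
      rw [hmin k (Finset.mem_range.mp hk), sub_self]
  have hcase : ((ξ₀ n : ℤ) - (ξ₁ n : ℤ)) = 1 ∨ ((ξ₀ n : ℤ) - (ξ₁ n : ℤ)) = -1 := by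
    have h0 := hξ₀ n; have h1 := hξ₁ n; omega
  rcases hcase with h | h <;> rw [h] at key
  · simp only [one_mul] at key
    refine ⟨Or.inl key, ?_⟩
    rintro ⟨h, hh⟩
    exact hdiv (n + 1) n (Nat.lt_succ_self n) ⟨h, hh.trans key⟩
  · rw [neg_mul, one_mul, neg_smul] at key
    refine ⟨Or.inr key, ?_⟩
    rintro ⟨h, hh⟩
    refine hdiv (n + 1) n (Nat.lt_succ_self n) ⟨-h, ?_⟩
    rw [smul_neg, hh, key, neg_neg]
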